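/- arXiv:2104.05629 — 2 statements merged into one kernel-verified Lean document; each statement's English description precedes it below -/
import Mathlib

section
/- For any q ≥ r and 0 ≤ s ≤ r, the ratio of falling factorials satisfies (q−s)_{r−s} / (q)_r ≤ e^s / q^s, where (a)_b = a(a−1)⋯(a−b+1). -/
lemma aux_nat (q s : ℕ) (hs : s ≤ q) :
    q ^ s * s.factorial ≤ s ^ s * q.descFactorial s := by
  rw [← Nat.descFactorial_self, Nat.descFactorial_eq_prod_range,
    Nat.descFactorial_eq_prod_range, Finset.pow_eq_prod_const, Finset.pow_eq_prod_const,
    ← Finset.prod_mul_distrib, ← Finset.prod_mul_distrib]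
  apply Finset.prod_le_prod' -- maybe name wrong
  intro i hi
  simp only [Finset.mem_range] at hi
  have : q * i ≥ s * i := Nat.mul_le_mul_right i hs
  calc q * (s - i) = q * s - q * i := by rw [Nat.mul_sub]
    _ ≤ s * q - s * i := by
        exact tsub_le_tsub (le_of_eq (Nat.mul_comm q s)) this
    _ = s * (q - i) := by rw [Nat.mul_sub]

lemma aux_exp (s : ℕ) : (s : ℝ) ^ s ≤ (Real.exp 1) ^ s * s.factorial := by
  have h := Real.sum_le_exp_of_nonneg (x := (s : ℝ)) (by positivity) (s + 1)
  have h2 : (s : ℝ) ^ s / s.factorial ≤ Real.exp s := by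
    refine le_trans ?_ h
    have := Finset.single_le_sum (f := fun i => (s : ℝ) ^ i / i.factorial)
      (fun i _ => by positivity) (Finset.self_mem_range_succ s)
    simpa using this
  have hexp : Real.exp (s : ℝ) = (Real.exp 1) ^ s := by
    rw [← Real.exp_nat_mul]; simp
  rw [div_le_iff₀ (by positivity)] at h2
  rw [← hexp]; exact h2

/-- For `q ≥ r` and `0 ≤ s ≤ r`, the ratio of falling factorials satisfies
`(q−s)_{r−s} / (q)_r ≤ e^s / q^s`. -/
theorem stmt1 (q r s : ℕ) (hq0 : 0 < q) (hrq : r ≤ q) (hsr : s ≤ r) :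
    ((q - s).descFactorial (r - s) : ℝ) / (q.descFactorial r : ℝ)
      ≤ (Real.exp 1) ^ s / (q : ℝ) ^ s := by
  have hsq : s ≤ q := hsr.trans hrq
  have hkey : (q - s).descFactorial (r - s) * q.descFactorial s = q.descFactorial r :=
    Nat.descFactorial_mul_descFactorial hsr
  have hA : 0 < (q - s).descFactorial (r - s) := by
    rcases Nat.eq_zero_or_pos ((q - s).descFactorial (r - s)) with h | h
    · exact absurd (Nat.descFactorial_eq_zero_iff_lt.mp h) (by omega)
    · exact h
  have hB : 0 < q.descFactorial s := by
    rcases Nat.eq_zero_or_pos (q.descFactorial s) with h | h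
    · exact absurd (Nat.descFactorial_eq_zero_iff_lt.mp h) (by omega)
    · exact h
  have hApos : (0 : ℝ) < ((q - s).descFactorial (r - s) : ℝ) := by exact_mod_cast hA
  have hBpos : (0 : ℝ) < (q.descFactorial s : ℝ) := by exact_mod_cast hB
  rw [← hkey]
  push_cast
  rw [div_le_div_iff₀ (by positivity) (by positivity)]
  -- goal: A * q^s ≤ e^s * (A * B)
  have hmain : (q : ℝ) ^ s ≤ (Real.exp 1) ^ s * (q.descFactorial s : ℝ) := by
    have h1 : (q : ℝ) ^ s * s.factorial ≤ (s : ℝ) ^ s * (q.descFactorial s : ℝ) := by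
      exact_mod_cast aux_nat q s hsq
    have h2 := aux_exp s
    have hfac : (0 : ℝ) < (s.factorial : ℝ) := by exact_mod_cast s.factorial_pos
    have h3 : (q : ℝ) ^ s * s.factorial ≤ ((Real.exp 1) ^ s * s.factorial) * (q.descFactorial s : ℝ) :=
      h1.trans (by
        apply mul_le_mul_of_nonneg_right h2 hBpos.le)
    calc (q : ℝ) ^ s = (q : ℝ) ^ s * s.factorial / s.factorial := by field_simp
      _ ≤ ((Real.exp 1) ^ s * s.factorial) * (q.descFactorial s : ℝ) / s.factorial := by
          gcongr
      _ = (Real.exp 1) ^ s * (q.descFactorial s : ℝ) := by field_simp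
  calc ((q - s).descFactorial (r - s) : ℝ) * (q : ℝ) ^ s
      ≤ ((q - s).descFactorial (r - s) : ℝ) * ((Real.exp 1) ^ s * (q.descFactorial s : ℝ)) :=
        mul_le_mul_of_nonneg_left hmain hApos.le
    _ = Real.exp 1 ^ s * (((q - s).descFactorial (r - s) : ℝ) * (q.descFactorial s : ℝ)) := by ring
end

section
/- Let H be an r-uniform, κ-spread hypergraph on X, and let H* be the hypergraph on X* = X × [q] (with q ≥ r) whose edges are all rainbow colorings of edges of H, i.e., sets {(x_1,c_1),…,(x_r,c_r)} with {x_1,…,x_r} ∈ H and all c_i distinct. Then H* is (qκ/e)-spread: for every S* ⊆ X*, |H* ∩ ⟨S*⟩| ≤ (e/(qκ))^{|S*|} |H*|. -/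
open Finset

lemma aux_succ_pow (m : ℕ) : ((m + 1 : ℕ) : ℝ) ^ m ≤ Real.exp 1 * (m : ℝ) ^ m := by
  rcases Nat.eq_zero_or_pos m with h | h
  · subst h; simpa using Real.one_le_exp (by norm_num)
  · have hm : (0 : ℝ) < m := by exact_mod_cast h
    have h1 : ((m + 1 : ℕ) : ℝ) = (m : ℝ) * (1 + 1 / m) := by
      push_cast; field_simp
    have h2 : (1 + 1 / (m : ℝ)) ≤ Real.exp (1 / m) := by
      simpa [add_comm] using Real.add_one_le_exp (1 / (m : ℝ))
    calc ((m + 1 : ℕ) : ℝ) ^ m = (m : ℝ) ^ m * (1 + 1 / (m : ℝ)) ^ m := by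
          rw [h1, mul_pow]
      _ ≤ (m : ℝ) ^ m * Real.exp (1 / m) ^ m := by
          gcongr
      _ = (m : ℝ) ^ m * Real.exp 1 := by
          rw [← Real.exp_nat_mul]
          congr 1
          field_simp
      _ = Real.exp 1 * (m : ℝ) ^ m := mul_comm _ _

lemma aux_B (q : ℕ) : ∀ s, s ≤ q →
    (q : ℝ) ^ q ≤ Real.exp 1 ^ s * (q.descFactorial s : ℝ) * ((q - s : ℕ) : ℝ) ^ (q - s) := by
  intro s
  induction s with
  | zero => intro _; simp
  | succ s ih =>
    intro hsq
    have hs : s ≤ q := le_of_lt (Nat.lt_of_succ_le hsq)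
    have IH := ih hs
    set m := q - (s + 1) with hm
    have hqs : q - s = m + 1 := by omega
    have hd : (q.descFactorial (s + 1) : ℝ) = ((q - s : ℕ) : ℝ) * (q.descFactorial s : ℝ) := by
      rw [Nat.descFactorial_succ]; push_cast; ring
    calc (q : ℝ) ^ q ≤ Real.exp 1 ^ s * (q.descFactorial s : ℝ) * ((q - s : ℕ) : ℝ) ^ (q - s) := IH
      _ = Real.exp 1 ^ s * (q.descFactorial s : ℝ) * (((m + 1 : ℕ) : ℝ) * ((m + 1 : ℕ) : ℝ) ^ m) := by
          rw [hqs]; push_cast; ring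
      _ ≤ Real.exp 1 ^ s * (q.descFactorial s : ℝ) * (((m + 1 : ℕ) : ℝ) * (Real.exp 1 * (m : ℝ) ^ m)) := by
          have h1 := aux_succ_pow m
          gcongr
      _ = Real.exp 1 ^ (s + 1) * (q.descFactorial (s + 1) : ℝ) * ((q - (s + 1) : ℕ) : ℝ) ^ (q - (s + 1)) := by
          rw [hd, hqs, ← hm]; push_cast; ring

lemma aux_main (q s : ℕ) (h : s ≤ q) :
    (q : ℝ) ^ s ≤ Real.exp 1 ^ s * (q.descFactorial s : ℝ) := by
  rcases Nat.eq_zero_or_pos q with hq | hq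
  · subst hq
    have : s = 0 := Nat.le_zero.mp h
    subst this; simp
  · have hq' : (0 : ℝ) < q := by exact_mod_cast hq
    have hB := aux_B q s h
    have h2 : ((q - s : ℕ) : ℝ) ^ (q - s) ≤ (q : ℝ) ^ (q - s) := by
      have hle : ((q - s : ℕ) : ℝ) ≤ (q : ℝ) := by exact_mod_cast Nat.sub_le q s
      exact pow_le_pow_left₀ (by positivity) hle _
    have h3 : (q : ℝ) ^ q ≤ Real.exp 1 ^ s * (q.descFactorial s : ℝ) * (q : ℝ) ^ (q - s) := by
      calc (q : ℝ) ^ q ≤ Real.exp 1 ^ s * (q.descFactorial s : ℝ) * ((q - s : ℕ) : ℝ) ^ (q - s) := hB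
        _ ≤ _ := by
            have h0 : (0 : ℝ) ≤ Real.exp 1 ^ s * (q.descFactorial s : ℝ) := by positivity
            exact mul_le_mul_of_nonneg_left h2 h0
    have hed : (q : ℝ) ^ q = (q : ℝ) ^ s * (q : ℝ) ^ (q - s) := by
      rw [← pow_add]; congr 1; omega
    rw [hed] at h3
    have hpos : (0 : ℝ) < (q : ℝ) ^ (q - s) := by positivity
    exact le_of_mul_le_mul_right h3 hpos

lemma aux_fiber {X : Type*} [Fintype X] [DecidableEq X] {q : ℕ}
    (Sstar : Finset (X × Fin q)) (e : Finset X)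
    (F : Finset (Finset (X × Fin q)))
    (hF : ∀ E ∈ F, Sstar ⊆ E ∧ E.image Prod.fst = e ∧
      Set.InjOn Prod.fst (E : Set (X × Fin q)) ∧ Set.InjOn Prod.snd (E : Set (X × Fin q))) :
    F.card ≤ ((Finset.univ \ Sstar.image Prod.snd : Finset (Fin q)).card).descFactorial
      ((e \ Sstar.image Prod.fst).card) := by
  classical
  set ξS := Sstar.image Prod.fst with hξS
  set cS := Sstar.image Prod.snd with hcS
  set A := e \ ξS with hA
  set B := (Finset.univ \ cS : Finset (Fin q)) with hB
  -- unique existence of a pair with given first coordinate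
  have huniq : ∀ E ∈ F, ∀ x : A, ∃! p, p ∈ E ∧ p.1 = (x : X) := by
    intro E hE x
    obtain ⟨hsub, himg, hf, hs⟩ := hF E hE
    have hx : (x : X) ∈ e := (mem_sdiff.mp x.2).1
    rw [← himg] at hx
    obtain ⟨p, hp, hpx⟩ := mem_image.mp hx
    refine ⟨p, ⟨hp, hpx⟩, ?_⟩
    rintro p' ⟨hp', hpx'⟩
    exact hf hp' hp (by rw [hpx, hpx'])
  -- the color function
  set col : ∀ E, E ∈ F → A → X × Fin q := fun E hE x =>
    Finset.choose (fun p => p.1 = (x : X)) E (huniq E hE x) with hcol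
  have hcol_mem : ∀ E (hE : E ∈ F) (x : A), col E hE x ∈ E := fun E hE x =>
    Finset.choose_mem _ _ _
  have hcol_fst : ∀ E (hE : E ∈ F) (x : A), (col E hE x).1 = (x : X) := fun E hE x =>
    Finset.choose_property (fun p => p.1 = (x : X)) E (huniq E hE x)
  have hcol_snd : ∀ E (hE : E ∈ F) (x : A), (col E hE x).2 ∈ B := by
    intro E hE x
    obtain ⟨hsub, himg, hf, hs⟩ := hF E hE
    rw [hB, mem_sdiff]
    refine ⟨mem_univ _, fun hc => ?_⟩
    obtain ⟨p', hp', hp'2⟩ := mem_image.mp hc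
    have hp'E : p' ∈ E := hsub hp'
    have : p' = col E hE x := hs hp'E (hcol_mem E hE x) hp'2
    have hx2 : (x : X) ∈ ξS := by
      rw [hξS]
      exact mem_image.mpr ⟨p', hp', by rw [this]; exact hcol_fst E hE x⟩
    exact (mem_sdiff.mp x.2).2 hx2
  -- the embedding associated to each E
  set f : ∀ E, E ∈ F → (A ↪ B) := fun E hE =>
    ⟨fun x => ⟨(col E hE x).2, hcol_snd E hE x⟩, by
      intro x y hxy
      obtain ⟨hsub, himg, hf, hs⟩ := hF E hE
      have h2 : (col E hE x).2 = (col E hE y).2 := congrArg Subtype.val hxy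
      have : col E hE x = col E hE y := hs (hcol_mem E hE x) (hcol_mem E hE y) h2
      have hfst : ((x : X) : X) = (y : X) := by
        rw [← hcol_fst E hE x, ← hcol_fst E hE y, this]
      exact Subtype.ext hfst⟩ with hfdef
  -- injectivity on F
  have key : ∀ E (hE : E ∈ F) E' (hE' : E' ∈ F), f E hE = f E' hE' → E ⊆ E' := by
    intro E hE E' hE' hff p hp
    obtain ⟨hsub, himg, hfi, hsi⟩ := hF E hE
    obtain ⟨hsub', himg', hfi', hsi'⟩ := hF E' hE'
    by_cases hx : p.1 ∈ ξS
    · obtain ⟨p', hp', hp'1⟩ := mem_image.mp hx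
      have : p' = p := hfi (hsub hp') hp hp'1
      exact hsub' (this ▸ hp')
    · have hpe : p.1 ∈ e := by
        rw [← himg]; exact mem_image_of_mem _ hp
      set x : A := ⟨p.1, mem_sdiff.mpr ⟨hpe, hx⟩⟩ with hxdef
      have hcolx : col E hE x = p := by
        have := (huniq E hE x).unique ⟨hcol_mem E hE x, hcol_fst E hE x⟩ ⟨hp, rfl⟩
        exact this
      have heq : ((f E hE) x : Fin q) = ((f E' hE') x : Fin q) := by rw [hff]
      have h2 : (col E hE x).2 = (col E' hE' x).2 := heq
      have hfst' : (col E' hE' x).1 = p.1 := hcol_fst E' hE' x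
      have : col E' hE' x = p := by
        have := hcol_mem E' hE' x
        rw [Prod.ext_iff]
        constructor
        · exact hfst'
        · rw [← h2, hcolx]
      rw [← this]
      exact hcol_mem E' hE' x
  have hinj : Function.Injective (fun E : {E // E ∈ F} => f E.1 E.2) := by
    rintro ⟨E, hE⟩ ⟨E', hE'⟩ h
    simp only at h
    exact Subtype.ext (Subset.antisymm (key E hE E' hE' h) (key E' hE' E hE h.symm))
  have hcard := Fintype.card_le_of_injective _ hinj
  rw [Fintype.card_coe, Fintype.card_embedding_eq, Fintype.card_coe, Fintype.card_coe] at hcard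
  exact hcard

lemma aux_lower {X : Type*} [Fintype X] [DecidableEq X] {r q : ℕ}
    (H : Finset (Finset X)) (Hstar : Finset (Finset (X × Fin q)))
    (huniform : ∀ e ∈ H, e.card = r)
    (hHstar : ∀ E : Finset (X × Fin q),
      E ∈ Hstar ↔ (E.image Prod.fst ∈ H ∧ E.card = r ∧ (E.image Prod.snd).card = r)) :
    H.card * q.descFactorial r ≤ Hstar.card := by
  classical
  set G : Finset X → Finset (Finset (X × Fin q)) := fun e =>
    (Finset.univ : Finset ({x // x ∈ e} ↪ Fin q)).image
      (fun g => e.attach.image (fun x => (x.1, g x))) with hG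
  -- basic facts about elements of G e
  have himg : ∀ (e : Finset X) (g : {x // x ∈ e} ↪ Fin q),
      (e.attach.image (fun x => (x.1, g x))).image Prod.fst = e := by
    intro e g
    rw [Finset.image_image]
    exact Finset.attach_image_val
  have hmapinj : ∀ (e : Finset X) (g : {x // x ∈ e} ↪ Fin q),
      Function.Injective (fun x : {x // x ∈ e} => (x.1, g x)) := by
    intro e g x y hxy
    exact Subtype.ext (congrArg Prod.fst hxy)
  have hcardE : ∀ (e : Finset X) (g : {x // x ∈ e} ↪ Fin q),
      (e.attach.image (fun x => (x.1, g x))).card = e.card := by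
    intro e g
    rw [Finset.card_image_of_injective _ (hmapinj e g), Finset.card_attach]
  have hsnd : ∀ (e : Finset X) (g : {x // x ∈ e} ↪ Fin q),
      ((e.attach.image (fun x => (x.1, g x))).image Prod.snd).card = e.card := by
    intro e g
    rw [Finset.image_image]
    have h0 : (Prod.snd ∘ fun x : {x // x ∈ e} => (x.1, g x)) = fun x => g x := rfl
    rw [h0, Finset.card_image_of_injective _ g.injective, Finset.card_attach]
  have hsub : H.biUnion G ⊆ Hstar := by
    intro E hE
    obtain ⟨e, he, hEe⟩ := Finset.mem_biUnion.mp hE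
    obtain ⟨g, _, rfl⟩ := Finset.mem_image.mp hEe
    rw [hHstar]
    refine ⟨by rw [himg]; exact he, ?_, ?_⟩
    · rw [hcardE]; exact huniform e he
    · rw [hsnd]; exact huniform e he
  have hGfst : ∀ (e : Finset X), ∀ E ∈ G e, E.image Prod.fst = e := by
    intro e E hE
    obtain ⟨g, _, rfl⟩ := Finset.mem_image.mp hE
    exact himg e g
  have hdisj : ∀ e ∈ H, ∀ e' ∈ H, e ≠ e' → Disjoint (G e) (G e') := by
    intro e _ e' _ hne
    rw [Finset.disjoint_left]
    intro E hE hE'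
    exact hne ((hGfst e E hE).symm.trans (hGfst e' E hE'))
  have hGcard : ∀ e ∈ H, (G e).card = q.descFactorial r := by
    intro e he
    have hinj : Function.Injective
        (fun g : {x // x ∈ e} ↪ Fin q => e.attach.image (fun x => (x.1, g x))) := by
      intro g g' hgg
      apply Function.Embedding.ext
      intro x
      have hgg2 : (e.attach.image fun x => (x.1, g x)) = (e.attach.image fun x => (x.1, g' x)) := hgg
      have hx : (x.1, g x) ∈ e.attach.image (fun y => (y.1, g' y)) := by
        rw [← hgg2]
        exact Finset.mem_image_of_mem _ (Finset.mem_attach _ _)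
      obtain ⟨y, _, hy⟩ := Finset.mem_image.mp hx
      have h1 : y.1 = x.1 := congrArg Prod.fst hy
      have h2 : y = x := Subtype.ext h1
      have := congrArg Prod.snd hy
      simpa [h2] using this.symm
    rw [hG]
    rw [Finset.card_image_of_injective _ hinj, Finset.card_univ,
      Fintype.card_embedding_eq, Fintype.card_fin, Fintype.card_coe, huniform e he]
  calc H.card * q.descFactorial r = ∑ _e ∈ H, q.descFactorial r := by
        rw [Finset.sum_const, smul_eq_mul]
    _ = ∑ e ∈ H, (G e).card := (Finset.sum_congr rfl (fun e he => (hGcard e he).symm))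
    _ = (H.biUnion G).card := (Finset.card_biUnion hdisj).symm
    _ ≤ Hstar.card := Finset.card_le_card hsub


/-- If `H` is an `r`-uniform, `κ`-spread hypergraph on `X` and `H*` is the hypergraph
on `X × [q]` (with `q ≥ r`) of rainbow colorings of edges of `H`, then `H*` is
`(qκ/e)`-spread: for every `S* ⊆ X × [q]`,
`|H* ∩ ⟨S*⟩| ≤ (e/(qκ))^{|S*|} |H*|`. -/
theorem stmt2 {X : Type*} [Fintype X] [DecidableEq X] (r q : ℕ) (κ : ℝ)
    (hκ : 0 < κ) (hrq : r ≤ q)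
    (H : Finset (Finset X))
    (huniform : ∀ e ∈ H, e.card = r)
    (hspread : ∀ S : Finset X,
      ((H.filter (fun e => S ⊆ e)).card : ℝ) ≤ (H.card : ℝ) / κ ^ S.card)
    (Hstar : Finset (Finset (X × Fin q)))
    (hHstar : ∀ E : Finset (X × Fin q),
      E ∈ Hstar ↔ (E.image Prod.fst ∈ H ∧ E.card = r ∧ (E.image Prod.snd).card = r)) :
    ∀ Sstar : Finset (X × Fin q),
      ((Hstar.filter (fun E => Sstar ⊆ E)).card : ℝ)
        ≤ (Real.exp 1 / ((q : ℝ) * κ)) ^ Sstar.card * (Hstar.card : ℝ) := by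
  classical
  intro Sstar
  by_cases hne : (Hstar.filter (fun E => Sstar ⊆ E)).Nonempty
  case neg =>
    rw [Finset.not_nonempty_iff_eq_empty] at hne
    rw [hne]
    simp only [Finset.card_empty, Nat.cast_zero]
    positivity
  obtain ⟨E0, hE0⟩ := hne
  rw [Finset.mem_filter] at hE0
  obtain ⟨hE0star, hE0sub⟩ := hE0
  have hstarfacts : ∀ E ∈ Hstar, E.card = r ∧
      Set.InjOn Prod.fst (E : Set (X × Fin q)) ∧ Set.InjOn Prod.snd (E : Set (X × Fin q)) := by
    intro E hE
    rw [hHstar] at hE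
    obtain ⟨h1, h2, h3⟩ := hE
    refine ⟨h2, ?_, ?_⟩
    · exact Finset.injOn_of_card_image_eq (by rw [huniform _ h1, h2])
    · exact Finset.injOn_of_card_image_eq (by rw [h3, h2])
  obtain ⟨hE0card, hE0f, hE0s⟩ := hstarfacts E0 hE0star
  have hsubcoe : (Sstar : Set (X × Fin q)) ⊆ (E0 : Set (X × Fin q)) :=
    Finset.coe_subset.mpr hE0sub
  have hsr : Sstar.card ≤ r := hE0card ▸ Finset.card_le_card hE0sub
  have hξcard : (Sstar.image Prod.fst).card = Sstar.card :=
    Finset.card_image_of_injOn (hE0f.mono hsubcoe)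
  have hccard : (Sstar.image Prod.snd).card = Sstar.card :=
    Finset.card_image_of_injOn (hE0s.mono hsubcoe)
  set s := Sstar.card with hs
  set D := (q - s).descFactorial (r - s) with hD
  have hsq : s ≤ q := hsr.trans hrq
  -- Step 1 : fiber counting
  have step1 : (Hstar.filter (fun E => Sstar ⊆ E)).card ≤
      D * (H.filter (fun e => Sstar.image Prod.fst ⊆ e)).card := by
    apply Finset.card_le_mul_card_image_of_maps_to
      (f := fun E => E.image Prod.fst) (t := H.filter (fun e => Sstar.image Prod.fst ⊆ e))
    · intro E hE
      rw [Finset.mem_filter] at hE ⊢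
      exact ⟨((hHstar E).mp hE.1).1, Finset.image_subset_image hE.2⟩
    · intro e he
      rw [Finset.mem_filter] at he
      have hbound := aux_fiber Sstar e
        ((Hstar.filter (fun E => Sstar ⊆ E)).filter (fun E => E.image Prod.fst = e)) ?_
      · have h1 : ((Finset.univ \ Sstar.image Prod.snd : Finset (Fin q)).card) = q - s := by
          rw [Finset.card_sdiff_of_subset (Finset.subset_univ _), Finset.card_univ, Fintype.card_fin, hccard]
        have h2 : ((e \ Sstar.image Prod.fst).card) = r - s := by
          rw [Finset.card_sdiff_of_subset he.2, huniform _ he.1, hξcard]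
        rw [h1, h2] at hbound
        exact hbound
      · intro E hE
        rw [Finset.mem_filter, Finset.mem_filter] at hE
        obtain ⟨⟨hE1, hE2⟩, hE3⟩ := hE
        obtain ⟨_, hf, hsn⟩ := hstarfacts E hE1
        exact ⟨hE2, hE3, hf, hsn⟩
  -- Step 2 : spreadness
  have step2 : ((H.filter (fun e => Sstar.image Prod.fst ⊆ e)).card : ℝ) ≤
      (H.card : ℝ) / κ ^ s := by
    have := hspread (Sstar.image Prod.fst)
    rwa [hξcard] at this
  -- Step 3 : lower bound on Hstar
  have step3 : ((H.card : ℝ) * (q.descFactorial r : ℝ)) ≤ (Hstar.card : ℝ) := by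
    exact_mod_cast aux_lower H Hstar huniform hHstar
  -- Step 4 : descFactorial splitting
  have hsplit : (q.descFactorial r : ℝ) = (D : ℝ) * (q.descFactorial s : ℝ) := by
    rw [hD]
    exact_mod_cast (Nat.descFactorial_mul_descFactorial hsr).symm
  by_cases hs0 : s = 0
  · rw [hs0, pow_zero, one_mul]
    exact_mod_cast Finset.card_filter_le Hstar _
  have hq0 : 0 < q := lt_of_lt_of_le (Nat.pos_of_ne_zero hs0) hsq |>.trans_le le_rfl
  have hqR : (0 : ℝ) < q := by exact_mod_cast hq0
  have key := aux_main q s hsq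
  have hfilterR : ((Hstar.filter (fun E => Sstar ⊆ E)).card : ℝ) ≤
      (D : ℝ) * ((H.card : ℝ) / κ ^ s) := by
    calc ((Hstar.filter (fun E => Sstar ⊆ E)).card : ℝ)
        ≤ (D : ℝ) * ((H.filter (fun e => Sstar.image Prod.fst ⊆ e)).card : ℝ) := by
          exact_mod_cast step1
      _ ≤ (D : ℝ) * ((H.card : ℝ) / κ ^ s) := by
          apply mul_le_mul_of_nonneg_left step2 (by positivity)
  have hmain : (D : ℝ) * ((H.card : ℝ) / κ ^ s) ≤
      (Real.exp 1 / ((q : ℝ) * κ)) ^ s * ((H.card : ℝ) * (q.descFactorial r : ℝ)) := by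
    rw [hsplit, div_pow, mul_pow]
    rw [mul_div_assoc', div_mul_eq_mul_div]
    rw [div_le_div_iff₀ (by positivity) (by positivity)]
    have ha : (0 : ℝ) ≤ (D : ℝ) * (H.card : ℝ) := by positivity
    have h5 : (q : ℝ) ^ s * ((D : ℝ) * (H.card : ℝ)) ≤
        (Real.exp 1 ^ s * (q.descFactorial s : ℝ)) * ((D : ℝ) * (H.card : ℝ)) :=
      mul_le_mul_of_nonneg_right key ha
    calc (D : ℝ) * (H.card : ℝ) * ((q : ℝ) ^ s * κ ^ s)
        = ((q : ℝ) ^ s * ((D : ℝ) * (H.card : ℝ))) * κ ^ s := by ring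
      _ ≤ ((Real.exp 1 ^ s * (q.descFactorial s : ℝ)) * ((D : ℝ) * (H.card : ℝ))) * κ ^ s :=
          mul_le_mul_of_nonneg_right h5 (by positivity)
      _ = Real.exp 1 ^ s * ((H.card : ℝ) * ((D : ℝ) * (q.descFactorial s : ℝ))) * κ ^ s := by
          ring
  have hlast : (Real.exp 1 / ((q : ℝ) * κ)) ^ s * ((H.card : ℝ) * (q.descFactorial r : ℝ)) ≤
      (Real.exp 1 / ((q : ℝ) * κ)) ^ s * (Hstar.card : ℝ) :=
    mul_le_mul_of_nonneg_left step3 (by positivity)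
  exact hfilterR.trans (hmain.trans hlast)
end
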